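/- arXiv:2207.00991 — 7 statements merged into one kernel-verified Lean document; each statement's English description precedes it below -/
import Mathlib

section
/- Nonnegativity of the relative energy: Let p, e, s : (0,∞)² → ℝ be continuously differentiable functions of (ρ,ϑ) satisfying the Gibbs equation (ϑ ∂s/∂ρ = ∂e/∂ρ − p/ρ² and ϑ ∂s/∂ϑ = ∂e/∂ϑ) and the thermodynamic stability conditions (∂p/∂ρ > 0 and ∂e/∂ϑ > 0) on (0,∞)². Then for all ρ, ϑ, ρ̃, θ̃ > 0 and all u, ũ ∈ ℝ^d, the relative energy satisfies E(ρ,ϑ,u | ρ̃,θ̃,ũ) ≥ 0, with equality if and only if ρ = ρ̃, ϑ = θ̃ and u = ũ. -/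
open Real Set

/-- Ballistic free energy `H_θ̃(ρ,ϑ) = ρ(e(ρ,ϑ) − θ̃ s(ρ,ϑ))`. -/
noncomputable def Hball (e s : ℝ → ℝ → ℝ) (Θ ρ ϑ : ℝ) : ℝ := ρ * (e ρ ϑ - Θ * s ρ ϑ)

/-- Relative energy
`E(ρ,ϑ,u | ρ̃,θ̃,ũ) = ½ρ|u−ũ|² + H_θ̃(ρ,ϑ) − ∂_ρH_θ̃(ρ̃,θ̃)(ρ−ρ̃) − H_θ̃(ρ̃,θ̃)`,
where `∂_ρ H_θ̃` is taken at fixed second argument `θ̃`. -/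
noncomputable def relEnergy (e s : ℝ → ℝ → ℝ) {d : ℕ} (ρ ϑ : ℝ)
    (u : EuclideanSpace ℝ (Fin d)) (ρt θt : ℝ) (ut : EuclideanSpace ℝ (Fin d)) : ℝ :=
  2⁻¹ * ρ * ‖u - ut‖ ^ 2 + Hball e s θt ρ ϑ
    - deriv (fun r => Hball e s θt r θt) ρt * (ρ - ρt) - Hball e s θt ρt θt

/-- Differentiability of the first-variable slice of a `C¹` function on the open quadrant. -/
lemma slice_fst_diffAt {f : ℝ → ℝ → ℝ}
    (hf : ContDiffOn ℝ 1 (fun q : ℝ × ℝ => f q.1 q.2) (Ioi 0 ×ˢ Ioi 0))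
    {r t : ℝ} (hr : 0 < r) (ht : 0 < t) :
    DifferentiableAt ℝ (fun x => f x t) r := by
  have hopen : IsOpen ((Ioi (0:ℝ)) ×ˢ (Ioi (0:ℝ))) := isOpen_Ioi.prod isOpen_Ioi
  have hF : DifferentiableAt ℝ (fun q : ℝ × ℝ => f q.1 q.2) (r, t) :=
    (hf.differentiableOn one_ne_zero).differentiableAt (hopen.mem_nhds ⟨hr, ht⟩)
  exact hF.comp r ((differentiableAt_id (𝕜 := ℝ) (x := r)).prodMk (differentiableAt_const t))

/-- Differentiability of the second-variable slice of a `C¹` function on the open quadrant. -/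
lemma slice_snd_diffAt {f : ℝ → ℝ → ℝ}
    (hf : ContDiffOn ℝ 1 (fun q : ℝ × ℝ => f q.1 q.2) (Ioi 0 ×ˢ Ioi 0))
    {r t : ℝ} (hr : 0 < r) (ht : 0 < t) :
    DifferentiableAt ℝ (fun x => f r x) t := by
  have hopen : IsOpen ((Ioi (0:ℝ)) ×ˢ (Ioi (0:ℝ))) := isOpen_Ioi.prod isOpen_Ioi
  have hF : DifferentiableAt ℝ (fun q : ℝ × ℝ => f q.1 q.2) (r, t) :=
    (hf.differentiableOn one_ne_zero).differentiableAt (hopen.mem_nhds ⟨hr, ht⟩)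
  exact hF.comp t ((differentiableAt_const r).prodMk differentiableAt_id)

/-- **Nonnegativity of the relative energy.** Under Gibbs' equation and the
hypothesis of thermodynamic stability, `E(ρ,ϑ,u | ρ̃,θ̃,ũ) ≥ 0`, with equality if and
only if `ρ = ρ̃`, `ϑ = θ̃` and `u = ũ`. -/
theorem relative_energy_nonneg {d : ℕ}
    (p e s : ℝ → ℝ → ℝ)
    (hp : ContDiffOn ℝ 1 (fun q : ℝ × ℝ => p q.1 q.2) (Ioi 0 ×ˢ Ioi 0))
    (he : ContDiffOn ℝ 1 (fun q : ℝ × ℝ => e q.1 q.2) (Ioi 0 ×ˢ Ioi 0))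
    (hs : ContDiffOn ℝ 1 (fun q : ℝ × ℝ => s q.1 q.2) (Ioi 0 ×ˢ Ioi 0))
    (hGibbs : ∀ ρ ϑ : ℝ, 0 < ρ → 0 < ϑ →
      (ϑ * deriv (fun r => s r ϑ) ρ = deriv (fun r => e r ϑ) ρ - p ρ ϑ / ρ ^ 2) ∧
      (ϑ * deriv (fun t => s ρ t) ϑ = deriv (fun t => e ρ t) ϑ))
    (hStab : ∀ ρ ϑ : ℝ, 0 < ρ → 0 < ϑ →
      0 < deriv (fun r => p r ϑ) ρ ∧ 0 < deriv (fun t => e ρ t) ϑ)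
    (ρ ϑ ρt θt : ℝ) (hρ : 0 < ρ) (hϑ : 0 < ϑ) (hρt : 0 < ρt) (hθt : 0 < θt)
    (u ut : EuclideanSpace ℝ (Fin d)) :
    0 ≤ relEnergy e s ρ ϑ u ρt θt ut ∧
    (relEnergy e s ρ ϑ u ρt θt ut = 0 ↔ ρ = ρt ∧ ϑ = θt ∧ u = ut) := by
  classical
  -- the density slice of the ballistic free energy and its derivative
  set g : ℝ → ℝ := fun r => Hball e s θt r θt with hg_def
  set φ : ℝ → ℝ := fun r => e r θt - θt * s r θt + p r θt / r with hφ_def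
  have hg_deriv : ∀ r, 0 < r → HasDerivAt g (φ r) r := by
    intro r hr
    obtain ⟨hG1, _⟩ := hGibbs r θt hr hθt
    have he' := (slice_fst_diffAt he hr hθt).hasDerivAt
    have hs' := (slice_fst_diffAt hs hr hθt).hasDerivAt
    have H1 : HasDerivAt (fun x => e x θt - θt * s x θt)
        (deriv (fun x => e x θt) r - θt * deriv (fun x => s x θt) r) r :=
      he'.sub (hs'.const_mul θt)
    have H2 : HasDerivAt g
        (1 * (e r θt - θt * s r θt) +
          r * (deriv (fun x => e x θt) r - θt * deriv (fun x => s x θt) r)) r :=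
      (hasDerivAt_id r).mul H1
    have heq : 1 * (e r θt - θt * s r θt) +
        r * (deriv (fun x => e x θt) r - θt * deriv (fun x => s x θt) r) = φ r := by
      have : deriv (fun x => e x θt) r - θt * deriv (fun x => s x θt) r = p r θt / r ^ 2 := by
        linarith [hG1]
      rw [this, hφ_def]
      field_simp
    rw [heq] at H2; exact H2
  have hφ_deriv : ∀ r, 0 < r → HasDerivAt φ (deriv (fun x => p x θt) r / r) r := by
    intro r hr
    obtain ⟨hG1, _⟩ := hGibbs r θt hr hθt
    have he' := (slice_fst_diffAt he hr hθt).hasDerivAt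
    have hs' := (slice_fst_diffAt hs hr hθt).hasDerivAt
    have hp' := (slice_fst_diffAt hp hr hθt).hasDerivAt
    have Hq : HasDerivAt (fun x => p x θt / x)
        ((deriv (fun x => p x θt) r * r - p r θt * 1) / r ^ 2) r :=
      hp'.div (hasDerivAt_id r) hr.ne'
    have H : HasDerivAt φ
        (deriv (fun x => e x θt) r - θt * deriv (fun x => s x θt) r +
          (deriv (fun x => p x θt) r * r - p r θt * 1) / r ^ 2) r :=
      (he'.sub (hs'.const_mul θt)).add Hq
    have heq : deriv (fun x => e x θt) r - θt * deriv (fun x => s x θt) r +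
        (deriv (fun x => p x θt) r * r - p r θt * 1) / r ^ 2
        = deriv (fun x => p x θt) r / r := by
      have h1 : deriv (fun x => e x θt) r - θt * deriv (fun x => s x θt) r
          = p r θt / r ^ 2 := by linarith [hG1]
      rw [h1]
      field_simp
      ring
    rw [heq] at H; exact H
  have hφ_mono : StrictMonoOn φ (Ioi (0:ℝ)) := by
    apply strictMonoOn_of_deriv_pos (convex_Ioi 0)
    · intro x hx
      exact ((hφ_deriv x hx).differentiableAt.continuousAt).continuousWithinAt
    · intro x hx
      rw [interior_Ioi] at hx
      rw [(hφ_deriv x hx).deriv]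
      exact div_pos (hStab x θt hx hθt).1 hx
  -- the density part of the relative energy
  set D : ℝ := g ρ - φ ρt * (ρ - ρt) - g ρt with hD_def
  have hD : 0 ≤ D ∧ (D = 0 ↔ ρ = ρt) := by
    rcases lt_trichotomy ρ ρt with hlt | heq | hgt
    · have hcont : ContinuousOn g (Icc ρ ρt) := fun x hx =>
        ((hg_deriv x (lt_of_lt_of_le hρ hx.1)).differentiableAt.continuousAt).continuousWithinAt
      obtain ⟨c, hc, hceq⟩ := exists_hasDerivAt_eq_slope g φ hlt hcont
        (fun x hx => hg_deriv x (hρ.trans hx.1))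
      have hc0 : 0 < c := hρ.trans hc.1
      have hmono : φ c < φ ρt := hφ_mono hc0 hρt hc.2
      have hslope : φ c = (g ρt - g ρ) / (ρt - ρ) := hceq
      have hpos : 0 < ρt - ρ := by linarith
      have : g ρt - g ρ < φ ρt * (ρt - ρ) := by
        have := (div_lt_iff₀ hpos).mp (hslope ▸ hmono)
        linarith
      constructor
      · rw [hD_def]; nlinarith
      · constructor
        · intro h; exfalso; rw [hD_def] at h; nlinarith
        · intro h; exact absurd h hlt.ne
    · constructor
      · rw [hD_def, heq]; ring_nf; simp
      · constructor
        · intro _; exact heq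
        · intro _; rw [hD_def, heq]; ring
    · have hcont : ContinuousOn g (Icc ρt ρ) := fun x hx =>
        ((hg_deriv x (lt_of_lt_of_le hρt hx.1)).differentiableAt.continuousAt).continuousWithinAt
      obtain ⟨c, hc, hceq⟩ := exists_hasDerivAt_eq_slope g φ hgt hcont
        (fun x hx => hg_deriv x (hρt.trans hx.1))
      have hc0 : 0 < c := hρt.trans hc.1
      have hmono : φ ρt < φ c := hφ_mono hρt hc0 hc.1
      have hslope : φ c = (g ρ - g ρt) / (ρ - ρt) := hceq
      have hpos : 0 < ρ - ρt := by linarith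
      have : φ ρt * (ρ - ρt) < g ρ - g ρt := by
        have := (lt_div_iff₀ hpos).mp (hslope ▸ hmono)
        linarith
      constructor
      · rw [hD_def]; nlinarith
      · constructor
        · intro h; exfalso; rw [hD_def] at h; nlinarith
        · intro h; exact absurd h hgt.ne'
  -- the temperature part
  set ψ : ℝ → ℝ := fun t => ρ * (e ρ t - θt * s ρ t) with hψ_def
  have hψ_deriv : ∀ t, 0 < t →
      HasDerivAt ψ (ρ * deriv (fun τ => e ρ τ) t * (t - θt) / t) t := by
    intro t ht
    obtain ⟨_, hG2⟩ := hGibbs ρ t hρ ht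
    have he' := (slice_snd_diffAt he hρ ht).hasDerivAt
    have hs' := (slice_snd_diffAt hs hρ ht).hasDerivAt
    have H : HasDerivAt ψ
        (ρ * (deriv (fun τ => e ρ τ) t - θt * deriv (fun τ => s ρ τ) t)) t :=
      (he'.sub (hs'.const_mul θt)).const_mul ρ
    have hsder : deriv (fun τ => s ρ τ) t = deriv (fun τ => e ρ τ) t / t := by
      field_simp
      linarith [hG2]
    have heq : ρ * (deriv (fun τ => e ρ τ) t - θt * deriv (fun τ => s ρ τ) t)
        = ρ * deriv (fun τ => e ρ τ) t * (t - θt) / t := by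
      rw [hsder]; field_simp
    rw [heq] at H; exact H
  set T : ℝ := ψ ϑ - ψ θt with hT_def
  have hT : 0 ≤ T ∧ (T = 0 ↔ ϑ = θt) := by
    rcases lt_trichotomy ϑ θt with hlt | heq | hgt
    · have hcont : ContinuousOn ψ (Icc ϑ θt) := fun x hx =>
        ((hψ_deriv x (lt_of_lt_of_le hϑ hx.1)).differentiableAt.continuousAt).continuousWithinAt
      obtain ⟨c, hc, hceq⟩ := exists_hasDerivAt_eq_slope ψ
        (fun t => ρ * deriv (fun τ => e ρ τ) t * (t - θt) / t) hlt hcont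
        (fun x hx => hψ_deriv x (hϑ.trans hx.1))
      have hc0 : 0 < c := hϑ.trans hc.1
      have he'pos : 0 < deriv (fun τ => e ρ τ) c := (hStab ρ c hρ hc0).2
      have hneg : ρ * deriv (fun τ => e ρ τ) c * (c - θt) / c < 0 := by
        apply div_neg_of_neg_of_pos _ hc0
        have : c - θt < 0 := by linarith [hc.2]
        exact mul_neg_of_pos_of_neg (mul_pos hρ he'pos) this
      have hpos : 0 < θt - ϑ := by linarith
      have : ψ θt - ψ ϑ < 0 := by
        have h1 := hceq ▸ hneg
        have := (div_neg_iff.mp h1)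
        rcases this with ⟨_, h2⟩ | ⟨h2, _⟩
        · nlinarith
        · nlinarith
      constructor
      · rw [hT_def]; linarith
      · constructor
        · intro h; exfalso; rw [hT_def] at h; linarith
        · intro h; exact absurd h hlt.ne
    · constructor
      · rw [hT_def, heq]; ring_nf; simp
      · exact ⟨fun _ => heq, fun _ => by rw [hT_def, heq]; ring⟩
    · have hcont : ContinuousOn ψ (Icc θt ϑ) := fun x hx =>
        ((hψ_deriv x (lt_of_lt_of_le hθt hx.1)).differentiableAt.continuousAt).continuousWithinAt
      obtain ⟨c, hc, hceq⟩ := exists_hasDerivAt_eq_slope ψ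
        (fun t => ρ * deriv (fun τ => e ρ τ) t * (t - θt) / t) hgt hcont
        (fun x hx => hψ_deriv x (hθt.trans hx.1))
      have hc0 : 0 < c := hθt.trans hc.1
      have he'pos : 0 < deriv (fun τ => e ρ τ) c := (hStab ρ c hρ hc0).2
      have hposd : 0 < ρ * deriv (fun τ => e ρ τ) c * (c - θt) / c := by
        apply div_pos _ hc0
        have : 0 < c - θt := by linarith [hc.1]
        exact mul_pos (mul_pos hρ he'pos) this
      have hpos : 0 < ϑ - θt := by linarith
      have : 0 < ψ ϑ - ψ θt := by
        have h1 := hceq ▸ hposd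
        have := div_pos_iff.mp h1
        rcases this with ⟨h2, _⟩ | ⟨_, h2⟩
        · nlinarith
        · nlinarith
      constructor
      · rw [hT_def]; linarith
      · constructor
        · intro h; exfalso; rw [hT_def] at h; linarith
        · intro h; exact absurd h hgt.ne'
  -- the kinetic part
  set K : ℝ := 2⁻¹ * ρ * ‖u - ut‖ ^ 2 with hK_def
  have hK : 0 ≤ K ∧ (K = 0 ↔ u = ut) := by
    constructor
    · positivity
    · constructor
      · intro h
        have h2 : ‖u - ut‖ ^ 2 = 0 := by
          by_contra hne
          have : 0 < ‖u - ut‖ ^ 2 := lt_of_le_of_ne (sq_nonneg _) (Ne.symm hne)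
          nlinarith
        have : ‖u - ut‖ = 0 := by nlinarith [norm_nonneg (u - ut)]
        have := norm_eq_zero.mp this
        exact sub_eq_zero.mp this
      · intro h; rw [hK_def, h]; simp
  -- combine
  have hE : relEnergy e s ρ ϑ u ρt θt ut = K + T + D := by
    have hderg : deriv (fun r => Hball e s θt r θt) ρt = φ ρt := (hg_deriv ρt hρt).deriv
    rw [relEnergy, hderg, hK_def, hT_def, hD_def, hψ_def, hg_def]
    simp only [Hball]
    ring
  obtain ⟨hD0, hDiff⟩ := hD
  obtain ⟨hT0, hTiff⟩ := hT
  obtain ⟨hK0, hKiff⟩ := hK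
  constructor
  · rw [hE]; linarith
  · constructor
    · intro h
      rw [hE] at h
      have hKz : K = 0 := by linarith
      have hTz : T = 0 := by linarith
      have hDz : D = 0 := by linarith
      exact ⟨hDiff.mp hDz, hTiff.mp hTz, hKiff.mp hKz⟩
    · rintro ⟨h1, h2, h3⟩
      rw [hE, hDiff.mpr h1, hTiff.mpr h2, hKiff.mpr h3]
      ring
end

section
/- Convexity of the internal energy in conservative entropy variables for the ideal gas: Let c_v > 0. The function (ρ, S) ↦ c_v ρ^{1 + 1/c_v} e^{S/(c_v ρ)} is convex on the convex set (0,∞) × ℝ. -/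
open Real Set

lemma xlogx (x : ℝ) (hx : 0 < x) : x - 1 ≤ x * Real.log x := by
  have h := Real.add_one_le_exp (-Real.log x)
  rw [Real.exp_neg, Real.exp_log hx] at h
  have h2 := mul_le_mul_of_nonneg_left h hx.le
  rw [mul_inv_cancel₀ hx.ne'] at h2
  nlinarith

lemma core (a x w : ℝ) (ha : 0 < a) (hx : 0 < x) :
    1 + (a + 1) * (x - 1) + x * w ≤ x ^ (1 + a) * Real.exp w := by
  have hxa : x ^ a = Real.exp (a * Real.log x) := by
    rw [Real.rpow_def_of_pos hx, mul_comm]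
  have h1 : 1 + (w + a * Real.log x) ≤ x ^ a * Real.exp w := by
    rw [hxa, ← Real.exp_add]
    have := Real.add_one_le_exp (a * Real.log x + w)
    linarith
  have h2 : x - 1 ≤ x * Real.log x := xlogx x hx
  have h3 : x ^ (1 + a) = x * x ^ a := by
    rw [Real.rpow_add hx, Real.rpow_one]
  rw [h3]
  have h4 := mul_le_mul_of_nonneg_left h1 hx.le
  nlinarith

lemma key (cv r T ρ S : ℝ) (hcv : 0 < cv) (hr : 0 < r) (hρ : 0 < ρ) :
    cv * r ^ (1 + 1 / cv) * Real.exp (T / (cv * r))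
      + Real.exp (T / (cv * r)) * r ^ (1 / cv) / r * ((cv + 1) * r - T) * (ρ - r)
      + r ^ (1 / cv) * Real.exp (T / (cv * r)) * (S - T)
    ≤ cv * ρ ^ (1 + 1 / cv) * Real.exp (S / (cv * ρ)) := by
  have ha : 0 < 1 / cv := by positivity
  have hx : 0 < ρ / r := div_pos hρ hr
  have h := core (1 / cv) (ρ / r) (S / (cv * ρ) - T / (cv * r)) ha hx
  have hC : (0:ℝ) < cv * r ^ (1 + 1 / cv) * Real.exp (T / (cv * r)) := by positivity
  have h' := mul_le_mul_of_nonneg_left h hC.le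
  have hdiv : (ρ / r) ^ (1 + 1 / cv) = ρ ^ (1 + 1 / cv) / r ^ (1 + 1 / cv) :=
    Real.div_rpow hρ.le hr.le _
  have hexp : Real.exp (S / (cv * ρ) - T / (cv * r))
      = Real.exp (S / (cv * ρ)) / Real.exp (T / (cv * r)) := Real.exp_sub _ _
  have hrsplit : r ^ (1 + 1 / cv) = r * r ^ (1 / cv) := by
    rw [Real.rpow_add hr, Real.rpow_one]
  have hRHS : cv * r ^ (1 + 1 / cv) * Real.exp (T / (cv * r)) *
      ((ρ / r) ^ (1 + 1 / cv) * Real.exp (S / (cv * ρ) - T / (cv * r)))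
      = cv * ρ ^ (1 + 1 / cv) * Real.exp (S / (cv * ρ)) := by
    rw [hdiv, hexp]
    have h1 : r ^ (1 + 1 / cv) ≠ 0 := by positivity
    have h2 : Real.exp (T / (cv * r)) ≠ 0 := Real.exp_ne_zero _
    field_simp
  have hLHS : cv * r ^ (1 + 1 / cv) * Real.exp (T / (cv * r)) *
      (1 + (1 / cv + 1) * (ρ / r - 1) + (ρ / r) * (S / (cv * ρ) - T / (cv * r)))
      = cv * r ^ (1 + 1 / cv) * Real.exp (T / (cv * r))
      + Real.exp (T / (cv * r)) * r ^ (1 / cv) / r * ((cv + 1) * r - T) * (ρ - r)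
      + r ^ (1 / cv) * Real.exp (T / (cv * r)) * (S - T) := by
    rw [hrsplit]
    field_simp
    ring
  rw [hRHS, hLHS] at h'
  exact h'

lemma support_convex {f : ℝ × ℝ → ℝ} {s : Set (ℝ × ℝ)} (hs : Convex ℝ s)
    (h : ∀ z ∈ s, ∃ A B : ℝ, ∀ q ∈ s,
      f z + A * (q.1 - z.1) + B * (q.2 - z.2) ≤ f q) :
    ConvexOn ℝ s f := by
  refine ⟨hs, fun x hx y hy a b ha hb hab => ?_⟩
  have hzmem := hs hx hy ha hb hab
  obtain ⟨A, B, hAB⟩ := h _ hzmem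
  have h1 := hAB x hx
  have h2 := hAB y hy
  have hb' : b = 1 - a := by linarith
  subst hb'
  have hz1 : (a • x + (1 - a) • y).1 = a * x.1 + (1 - a) * y.1 := rfl
  have hz2 : (a • x + (1 - a) • y).2 = a * x.2 + (1 - a) * y.2 := rfl
  rw [hz1, hz2] at h1 h2
  have k1 := mul_le_mul_of_nonneg_left h1 ha
  have k2 := mul_le_mul_of_nonneg_left h2 hb
  have hsum : a * (f (a • x + (1 - a) • y) + A * (x.1 - (a * x.1 + (1 - a) * y.1))
        + B * (x.2 - (a * x.2 + (1 - a) * y.2)))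
      + (1 - a) * (f (a • x + (1 - a) • y) + A * (y.1 - (a * x.1 + (1 - a) * y.1))
        + B * (y.2 - (a * x.2 + (1 - a) * y.2)))
      = f (a • x + (1 - a) • y) := by ring
  have := add_le_add k1 k2
  dsimp only [smul_eq_mul] at *
  linarith

/-- **Convexity of the internal energy in conservative entropy variables for the
ideal gas.** For `c_v > 0`, the map `(ρ, S) ↦ c_v ρ^{1 + 1/c_v} e^{S/(c_v ρ)}`
is convex on `(0,∞) × ℝ`. -/
theorem ideal_gas_internal_energy_convex (cv : ℝ) (hcv : 0 < cv) :
    ConvexOn ℝ (Ioi (0 : ℝ) ×ˢ (univ : Set ℝ))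
      (fun q : ℝ × ℝ => cv * q.1 ^ (1 + 1 / cv) * Real.exp (q.2 / (cv * q.1))) := by
  apply support_convex ((convex_Ioi (0:ℝ)).prod convex_univ)
  intro z hz
  have hz1 : 0 < z.1 := hz.1
  refine ⟨Real.exp (z.2 / (cv * z.1)) * z.1 ^ (1 / cv) / z.1 * ((cv + 1) * z.1 - z.2),
    z.1 ^ (1 / cv) * Real.exp (z.2 / (cv * z.1)), ?_⟩
  intro q hq
  have hq1 : 0 < q.1 := hq.1
  have := key cv z.1 z.2 q.1 q.2 hcv hz1 hq1
  linarith
end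

section
/- Convexity of the total energy in conservative variables for the ideal gas: Let c_v > 0 and d ≥ 1. The total energy functional E(ρ, S, m) = |m|²/(2ρ) + c_v ρ^{1 + 1/c_v} e^{S/(c_v ρ)} is convex on the convex set (0,∞) × ℝ × ℝ^d. -/
open Real Set

lemma comb_pos (ρ₁ ρ₂ a b : ℝ) (h₁ : 0 < ρ₁) (h₂ : 0 < ρ₂)
    (ha : 0 ≤ a) (hb : 0 ≤ b) (hab : a + b = 1) : 0 < a*ρ₁ + b*ρ₂ := by
  rcases eq_or_lt_of_le ha with h | h
  · have hb1 : b = 1 := by linarith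
    simp [← h, hb1, h₂]
  · have : 0 < a*ρ₁ := mul_pos h h₁
    nlinarith [mul_nonneg hb h₂.le]

lemma kinetic_aux (ρ₁ ρ₂ A B a b : ℝ) (h₁ : 0 < ρ₁) (h₂ : 0 < ρ₂)
    (ha : 0 ≤ a) (hb : 0 ≤ b) (hab : a + b = 1) :
    (a*A + b*B)^2 / (2*(a*ρ₁ + b*ρ₂)) ≤ a*(A^2/(2*ρ₁)) + b*(B^2/(2*ρ₂)) := by
  have hρ : 0 < a*ρ₁ + b*ρ₂ := comb_pos ρ₁ ρ₂ a b h₁ h₂ ha hb hab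
  rw [div_le_iff₀ (by positivity)]
  have e1 : a*(A^2/(2*ρ₁)) + b*(B^2/(2*ρ₂)) = (a*A^2*ρ₂ + b*B^2*ρ₁) / (2*(ρ₁*ρ₂)) := by
    field_simp
  rw [e1, div_mul_eq_mul_div, le_div_iff₀ (by positivity)]
  nlinarith [mul_nonneg (mul_nonneg ha hb) (sq_nonneg (A*ρ₂ - B*ρ₁)), mul_pos h₁ h₂]

lemma repr_aux (cv r s : ℝ) (hcv : 0 < cv) (hr : 0 < r) :
    cv * r ^ (1 + 1/cv) * Real.exp (s/(cv*r)) = cv * r * Real.exp ((Real.log r + s/r)/cv) := by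
  rw [Real.rpow_def_of_pos hr, mul_assoc, ← Real.exp_add]
  nth_rewrite 3 [← Real.exp_log hr]
  rw [mul_assoc, ← Real.exp_add]
  congr 1
  field_simp
  ring

lemma internal_aux (cv ρ₁ ρ₂ S₁ S₂ a b : ℝ) (hcv : 0 < cv)
    (h₁ : 0 < ρ₁) (h₂ : 0 < ρ₂) (ha : 0 ≤ a) (hb : 0 ≤ b) (hab : a + b = 1) :
    cv * (a*ρ₁+b*ρ₂) ^ (1 + 1/cv) * Real.exp ((a*S₁+b*S₂)/(cv*(a*ρ₁+b*ρ₂)))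
      ≤ a * (cv * ρ₁ ^ (1 + 1/cv) * Real.exp (S₁/(cv*ρ₁)))
        + b * (cv * ρ₂ ^ (1 + 1/cv) * Real.exp (S₂/(cv*ρ₂))) := by
  have hρ : 0 < a*ρ₁ + b*ρ₂ := comb_pos ρ₁ ρ₂ a b h₁ h₂ ha hb hab
  have hα : 0 ≤ a*ρ₁/(a*ρ₁+b*ρ₂) := by positivity
  have hβ : 0 ≤ b*ρ₂/(a*ρ₁+b*ρ₂) := by positivity
  have hαβ : a*ρ₁/(a*ρ₁+b*ρ₂) + b*ρ₂/(a*ρ₁+b*ρ₂) = 1 := by field_simp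
  have hmul : (a*ρ₁+b*ρ₂) * Real.log (a*ρ₁+b*ρ₂)
      ≤ a*(ρ₁*Real.log ρ₁) + b*(ρ₂*Real.log ρ₂) := by
    have := Real.convexOn_mul_log.2 (mem_Ici.2 h₁.le) (mem_Ici.2 h₂.le) ha hb hab
    simpa [smul_eq_mul] using this
  have hx : (Real.log (a*ρ₁+b*ρ₂) + (a*S₁+b*S₂)/(a*ρ₁+b*ρ₂))/cv
      ≤ (a*ρ₁/(a*ρ₁+b*ρ₂)) * ((Real.log ρ₁ + S₁/ρ₁)/cv)
        + (b*ρ₂/(a*ρ₁+b*ρ₂)) * ((Real.log ρ₂ + S₂/ρ₂)/cv) := by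
    have key : (a*ρ₁/(a*ρ₁+b*ρ₂)) * ((Real.log ρ₁ + S₁/ρ₁)/cv)
        + (b*ρ₂/(a*ρ₁+b*ρ₂)) * ((Real.log ρ₂ + S₂/ρ₂)/cv)
        - (Real.log (a*ρ₁+b*ρ₂) + (a*S₁+b*S₂)/(a*ρ₁+b*ρ₂))/cv
        = ((a*(ρ₁*Real.log ρ₁) + b*(ρ₂*Real.log ρ₂))
            - (a*ρ₁+b*ρ₂) * Real.log (a*ρ₁+b*ρ₂))/((a*ρ₁+b*ρ₂)*cv) := by
      field_simp
      ring
    have h0 : (0:ℝ) ≤ ((a*(ρ₁*Real.log ρ₁) + b*(ρ₂*Real.log ρ₂))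
            - (a*ρ₁+b*ρ₂) * Real.log (a*ρ₁+b*ρ₂))/((a*ρ₁+b*ρ₂)*cv) :=
      div_nonneg (sub_nonneg.2 hmul) (mul_pos hρ hcv).le
    linarith [key ▸ h0]
  have hexp : Real.exp ((a*ρ₁/(a*ρ₁+b*ρ₂)) * ((Real.log ρ₁ + S₁/ρ₁)/cv)
        + (b*ρ₂/(a*ρ₁+b*ρ₂)) * ((Real.log ρ₂ + S₂/ρ₂)/cv))
      ≤ (a*ρ₁/(a*ρ₁+b*ρ₂)) * Real.exp ((Real.log ρ₁ + S₁/ρ₁)/cv)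
        + (b*ρ₂/(a*ρ₁+b*ρ₂)) * Real.exp ((Real.log ρ₂ + S₂/ρ₂)/cv) := by
    have := convexOn_exp.2 (mem_univ ((Real.log ρ₁ + S₁/ρ₁)/cv))
      (mem_univ ((Real.log ρ₂ + S₂/ρ₂)/cv)) hα hβ hαβ
    simpa [smul_eq_mul] using this
  rw [repr_aux cv _ _ hcv hρ, repr_aux cv _ _ hcv h₁, repr_aux cv _ _ hcv h₂]
  have step1 : cv * (a*ρ₁+b*ρ₂) * Real.exp ((Real.log (a*ρ₁+b*ρ₂) + (a*S₁+b*S₂)/(a*ρ₁+b*ρ₂))/cv)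
      ≤ cv * (a*ρ₁+b*ρ₂) * ((a*ρ₁/(a*ρ₁+b*ρ₂)) * Real.exp ((Real.log ρ₁ + S₁/ρ₁)/cv)
        + (b*ρ₂/(a*ρ₁+b*ρ₂)) * Real.exp ((Real.log ρ₂ + S₂/ρ₂)/cv)) := by
    have h1 : Real.exp ((Real.log (a*ρ₁+b*ρ₂) + (a*S₁+b*S₂)/(a*ρ₁+b*ρ₂))/cv)
        ≤ (a*ρ₁/(a*ρ₁+b*ρ₂)) * Real.exp ((Real.log ρ₁ + S₁/ρ₁)/cv)
        + (b*ρ₂/(a*ρ₁+b*ρ₂)) * Real.exp ((Real.log ρ₂ + S₂/ρ₂)/cv) :=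
      le_trans (Real.exp_le_exp.2 hx) hexp
    exact mul_le_mul_of_nonneg_left h1 (by positivity)
  refine le_trans step1 (le_of_eq ?_)
  field_simp

/-- **Convexity of the total energy in conservative variables for the ideal gas.**
For `c_v > 0` and `d ≥ 1`, the total energy
`E(ρ, S, m) = |m|²/(2ρ) + c_v ρ^{1 + 1/c_v} e^{S/(c_v ρ)}`
is convex on `(0,∞) × ℝ × ℝ^d`. -/
theorem ideal_gas_total_energy_convex (cv : ℝ) (hcv : 0 < cv) (d : ℕ) (hd : 1 ≤ d) :
    ConvexOn ℝ (Ioi (0 : ℝ) ×ˢ (univ : Set (ℝ × EuclideanSpace ℝ (Fin d))))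
      (fun q : ℝ × ℝ × EuclideanSpace ℝ (Fin d) =>
        ‖q.2.2‖ ^ 2 / (2 * q.1)
          + cv * q.1 ^ (1 + 1 / cv) * Real.exp (q.2.1 / (cv * q.1))) := by
  constructor
  · exact (convex_Ioi 0).prod convex_univ
  · rintro ⟨ρ₁, S₁, m₁⟩ hx ⟨ρ₂, S₂, m₂⟩ hy a b ha hb hab
    have h₁ : (0:ℝ) < ρ₁ := (mem_prod.1 hx).1
    have h₂ : (0:ℝ) < ρ₂ := (mem_prod.1 hy).1
    simp only [Prod.smul_mk, Prod.mk_add_mk, smul_eq_mul]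
    have hnorm : ‖a • m₁ + b • m₂‖ ≤ a*‖m₁‖ + b*‖m₂‖ := by
      calc ‖a • m₁ + b • m₂‖ ≤ ‖a • m₁‖ + ‖b • m₂‖ := norm_add_le _ _
        _ = a*‖m₁‖ + b*‖m₂‖ := by rw [norm_smul, norm_smul, Real.norm_of_nonneg ha, Real.norm_of_nonneg hb]
    have hρ : 0 < a*ρ₁ + b*ρ₂ := comb_pos ρ₁ ρ₂ a b h₁ h₂ ha hb hab
    have hkin : ‖a • m₁ + b • m₂‖^2 / (2*(a*ρ₁+b*ρ₂))
        ≤ a*(‖m₁‖^2/(2*ρ₁)) + b*(‖m₂‖^2/(2*ρ₂)) := by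
      refine le_trans ?_ (kinetic_aux ρ₁ ρ₂ ‖m₁‖ ‖m₂‖ a b h₁ h₂ ha hb hab)
      have hsq : ‖a • m₁ + b • m₂‖^2 ≤ (a*‖m₁‖+b*‖m₂‖)^2 :=
        pow_le_pow_left₀ (norm_nonneg _) hnorm 2
      exact (div_le_div_iff_of_pos_right (by positivity)).2 hsq
    have hint := internal_aux cv ρ₁ ρ₂ S₁ S₂ a b hcv h₁ h₂ ha hb hab
    calc ‖a • m₁ + b • m₂‖^2 / (2*(a*ρ₁+b*ρ₂))
          + cv * (a*ρ₁+b*ρ₂)^(1+1/cv) * Real.exp ((a*S₁+b*S₂)/(cv*(a*ρ₁+b*ρ₂)))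
        ≤ (a*(‖m₁‖^2/(2*ρ₁)) + b*(‖m₂‖^2/(2*ρ₂)))
          + (a * (cv * ρ₁^(1+1/cv) * Real.exp (S₁/(cv*ρ₁)))
            + b * (cv * ρ₂^(1+1/cv) * Real.exp (S₂/(cv*ρ₂)))) := add_le_add hkin hint
      _ = a * (‖m₁‖^2/(2*ρ₁) + cv * ρ₁^(1+1/cv) * Real.exp (S₁/(cv*ρ₁)))
          + b * (‖m₂‖^2/(2*ρ₂) + cv * ρ₂^(1+1/cv) * Real.exp (S₂/(cv*ρ₂))) := by ring
end

section
/- Pointwise bound for a monotone entropy function satisfying the third law: Let c > 0 and let S ∈ C¹((0,∞)) satisfy S′(q) < 0 and −S′(q) ≤ (3c)/(2q) for all q > 0, and lim_{q→∞} S(q) = 0. Then S(q) > 0 for all q > 0, and there is a constant C > 0, depending only on c and S(1), such that for all ρ > 0 and ϑ > 0: ρ S(ρ/ϑ^{3/2}) ≤ C(ρ + ρ|log ρ| + ρ max(log ϑ, 0)). -/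
open Real Set Filter

/-- **Pointwise bound for a monotone entropy function satisfying the third law.**
If `S ∈ C¹((0,∞))` with `S′ < 0`, `−S′(q) ≤ 3c/(2q)` and `S(q) → 0` as `q → ∞`,
then `S > 0` on `(0,∞)` and there is `C > 0`, depending only on `c` and `S(1)`,
such that `ρ S(ρ/ϑ^{3/2}) ≤ C(ρ + ρ|log ρ| + ρ [log ϑ]⁺)` for all `ρ, ϑ > 0`. -/
theorem entropy_pointwise_bound (c : ℝ) (hc : 0 < c) (S : ℝ → ℝ)
    (hSreg : ContDiffOn ℝ 1 S (Ioi 0))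
    (hS' : ∀ q : ℝ, 0 < q → deriv S q < 0 ∧ -deriv S q ≤ 3 * c / (2 * q))
    (hS3rd : Tendsto S atTop (nhds 0)) :
    (∀ q : ℝ, 0 < q → 0 < S q) ∧
    ∃ C : ℝ, 0 < C ∧ ∀ ρ ϑ : ℝ, 0 < ρ → 0 < ϑ →
      ρ * S (ρ / ϑ ^ ((3 : ℝ) / 2))
        ≤ C * (ρ + ρ * |Real.log ρ| + ρ * max (Real.log ϑ) 0) := by
  have hScont : ContinuousOn S (Ioi 0) := hSreg.continuousOn
  have hSdiff : ∀ x : ℝ, 0 < x → DifferentiableAt ℝ S x := fun x hx =>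
    ((hSreg.differentiableOn one_ne_zero).differentiableAt (isOpen_Ioi.mem_nhds hx))
  -- S is strictly decreasing on (0, ∞)
  have hanti : StrictAntiOn S (Ioi 0) := by
    apply strictAntiOn_of_deriv_neg (convex_Ioi 0) hScont
    intro x hx
    rw [interior_Ioi] at hx
    exact (hS' x hx).1
  -- S is nonnegative (limit 0 at infinity, decreasing)
  have hnonneg : ∀ q : ℝ, 0 < q → 0 ≤ S q := by
    intro q hq
    refine le_of_tendsto hS3rd ?_
    filter_upwards [eventually_gt_atTop q] with y hy
    exact (hanti hq (hq.trans hy) hy).le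
  have hpos : ∀ q : ℝ, 0 < q → 0 < S q := by
    intro q hq
    have h1 : S (q + 1) < S q := hanti (mem_Ioi.mpr hq) (mem_Ioi.mpr (by linarith)) (by linarith)
    have h2 : 0 ≤ S (q + 1) := hnonneg _ (by linarith)
    linarith
  refine ⟨hpos, ?_⟩
  -- the auxiliary function g(t) = S(t) + (3c/2) log t is monotone on (0,∞)
  set g : ℝ → ℝ := fun t => S t + 3 * c / 2 * Real.log t with hg_def
  have hgmono : MonotoneOn g (Ioi 0) := by
    have hgcont : ContinuousOn g (Ioi 0) := by
      apply hScont.add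
      exact continuousOn_const.mul (Real.continuousOn_log.mono (fun x hx => hx.out.ne'))
    have hgderiv : ∀ x : ℝ, 0 < x →
        HasDerivAt g (deriv S x + 3 * c / 2 * x⁻¹) x := fun x hx =>
      ((hSdiff x hx).hasDerivAt).add ((Real.hasDerivAt_log hx.ne').const_mul (3 * c / 2))
    apply monotoneOn_of_deriv_nonneg (convex_Ioi 0) hgcont
    · intro x hx
      rw [interior_Ioi] at hx
      exact (hgderiv x hx).differentiableAt.differentiableWithinAt
    · intro x hx
      rw [interior_Ioi] at hx
      rw [(hgderiv x hx).deriv]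
      have h2 := (hS' x hx).2
      have : 3 * c / (2 * x) = 3 * c / 2 * x⁻¹ := by
        field_simp
      linarith [this ▸ h2]
  -- key pointwise bound : S q ≤ S 1 + (3c/2) max (-log q) 0
  have key : ∀ q : ℝ, 0 < q → S q ≤ S 1 + 3 * c / 2 * max (-Real.log q) 0 := by
    intro q hq
    rcases le_or_gt q 1 with h1 | h1
    · have := hgmono (mem_Ioi.mpr hq) (mem_Ioi.mpr one_pos) h1
      simp only [hg_def, Real.log_one, mul_zero, add_zero] at this
      have hlog : -Real.log q ≤ max (-Real.log q) 0 := le_max_left _ _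
      nlinarith [hc]
    · have hle : S q ≤ S 1 := (hanti (mem_Ioi.mpr one_pos) (mem_Ioi.mpr hq) h1).le
      have : 0 ≤ 3 * c / 2 * max (-Real.log q) 0 := mul_nonneg (by positivity) (le_max_right _ _)
      linarith
  refine ⟨S 1 + 9 * c / 4, by have := hpos 1 one_pos; linarith, ?_⟩
  intro ρ ϑ hρ hϑ
  set q : ℝ := ρ / ϑ ^ ((3 : ℝ) / 2) with hq_def
  have hϑpow : (0 : ℝ) < ϑ ^ ((3 : ℝ) / 2) := Real.rpow_pos_of_pos hϑ _
  have hqpos : 0 < q := div_pos hρ hϑpow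
  have hlogq : Real.log q = Real.log ρ - 3 / 2 * Real.log ϑ := by
    rw [hq_def, Real.log_div hρ.ne' hϑpow.ne', Real.log_rpow hϑ]
  have hmax : max (-Real.log q) 0 ≤ |Real.log ρ| + 3 / 2 * max (Real.log ϑ) 0 := by
    apply max_le
    · rw [hlogq]
      have h1 : -Real.log ρ ≤ |Real.log ρ| := neg_le_abs _
      have h2 : Real.log ϑ ≤ max (Real.log ϑ) 0 := le_max_left _ _
      linarith
    · have h1 : 0 ≤ |Real.log ρ| := abs_nonneg _
      have h2 : (0:ℝ) ≤ max (Real.log ϑ) 0 := le_max_right _ _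
      linarith
  have hSq := key q hqpos
  have hS1 : 0 < S 1 := hpos 1 one_pos
  have habs : 0 ≤ |Real.log ρ| := abs_nonneg _
  have hmax0 : 0 ≤ max (Real.log ϑ) 0 := le_max_right _ _
  have hstep : ρ * S q ≤ ρ * (S 1 + 3 * c / 2 * (|Real.log ρ| + 3 / 2 * max (Real.log ϑ) 0)) := by
    apply mul_le_mul_of_nonneg_left _ hρ.le
    calc S q ≤ S 1 + 3 * c / 2 * max (-Real.log q) 0 := hSq
      _ ≤ S 1 + 3 * c / 2 * (|Real.log ρ| + 3 / 2 * max (Real.log ϑ) 0) := by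
          have := mul_le_mul_of_nonneg_left hmax (by positivity : (0:ℝ) ≤ 3 * c / 2)
          linarith
  calc ρ * S q ≤ ρ * (S 1 + 3 * c / 2 * (|Real.log ρ| + 3 / 2 * max (Real.log ϑ) 0)) := hstep
    _ ≤ (S 1 + 9 * c / 4) * (ρ + ρ * |Real.log ρ| + ρ * max (Real.log ϑ) 0) := by
        nlinarith [mul_nonneg hρ.le habs, mul_nonneg hρ.le hmax0, hS1.le, hc.le, hρ.le,
          mul_nonneg (mul_nonneg hρ.le habs) hc.le, mul_nonneg (mul_nonneg hρ.le hmax0) hc.le,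
          mul_nonneg (mul_nonneg hρ.le habs) hS1.le, mul_nonneg (mul_nonneg hρ.le hmax0) hS1.le]
end

section
/- Quadratic entropy bound for a monotone entropy function satisfying the third law: Let c > 0 and let S ∈ C¹((0,∞)) satisfy S′(q) < 0 and −S′(q) ≤ (3c)/(2q) for all q > 0, and lim_{q→∞} S(q) = 0. Then there is a constant C > 0, depending only on c and S(1), such that for all ρ > 0 and ϑ > 0: ρ S(ρ/ϑ^{3/2})² ≤ C(1 + ρ^{5/3} + ρϑ + ϑ²). -/
open Real Set Filter

private lemma sq_sum3_le (x y z : ℝ) : (x + y + z) ^ 2 ≤ 3 * x ^ 2 + 3 * y ^ 2 + 3 * z ^ 2 := by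
  nlinarith [sq_nonneg (x - y), sq_nonneg (x - z), sq_nonneg (y - z)]

private lemma logsq_le_four_mul (x : ℝ) (hx : 1 ≤ x) : (Real.log x) ^ 2 ≤ 4 * x := by
  have hx0 : (0 : ℝ) < x := lt_of_lt_of_le one_pos hx
  have h1 : Real.log (Real.sqrt x) ≤ Real.sqrt x - 1 :=
    Real.log_le_sub_one_of_pos (Real.sqrt_pos.mpr hx0)
  have h2 : Real.log x = 2 * Real.log (Real.sqrt x) := by
    rw [Real.log_sqrt hx0.le]; ring
  have hl0 : 0 ≤ Real.log x := Real.log_nonneg hx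
  nlinarith [Real.sq_sqrt hx0.le, Real.sqrt_nonneg x]

set_option maxHeartbeats 1600000 in
/-- **Quadratic entropy bound for a monotone entropy function satisfying the third
law.** If `S ∈ C¹((0,∞))` with `S′ < 0`, `−S′(q) ≤ 3c/(2q)` and `S(q) → 0` as
`q → ∞`, then there is `C > 0`, depending only on `c` and `S(1)`, such that
`ρ S(ρ/ϑ^{3/2})² ≤ C(1 + ρ^{5/3} + ρϑ + ϑ²)` for all `ρ, ϑ > 0`. -/
theorem entropy_quadratic_bound (c : ℝ) (hc : 0 < c) (S : ℝ → ℝ)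
    (hSreg : ContDiffOn ℝ 1 S (Ioi 0))
    (hS' : ∀ q : ℝ, 0 < q → deriv S q < 0 ∧ -deriv S q ≤ 3 * c / (2 * q))
    (hS3rd : Tendsto S atTop (nhds 0)) :
    ∃ C : ℝ, 0 < C ∧ ∀ ρ ϑ : ℝ, 0 < ρ → 0 < ϑ →
      ρ * S (ρ / ϑ ^ ((3 : ℝ) / 2)) ^ 2
        ≤ C * (1 + ρ ^ ((5 : ℝ) / 3) + ρ * ϑ + ϑ ^ 2) := by
  -- S is differentiable at every positive point (else `deriv S q = 0`, contradicting `< 0`)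
  have hdiff : ∀ q ∈ Ioi (0 : ℝ), DifferentiableAt ℝ S q := by
    intro q hq
    by_contra h
    have := deriv_zero_of_not_differentiableAt h
    have := (hS' q hq).1
    linarith
  -- S is antitone on (0, ∞)
  have hanti : AntitoneOn S (Ioi 0) := by
    apply antitoneOn_of_deriv_nonpos (convex_Ioi 0) hSreg.continuousOn
    · rw [interior_Ioi]
      exact fun x hx => (hdiff x hx).differentiableWithinAt
    · rw [interior_Ioi]
      exact fun x hx => le_of_lt (hS' x hx).1
  -- S is nonnegative on (0, ∞)
  have hSnn : ∀ q : ℝ, 0 < q → 0 ≤ S q := by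
    intro q hq
    refine le_of_tendsto hS3rd ?_
    filter_upwards [eventually_ge_atTop q, eventually_gt_atTop (0 : ℝ)] with t ht ht0
    exact hanti hq ht0 ht
  set a : ℝ := 3 * c / 2 with ha
  have ha0 : 0 < a := by positivity
  -- the function g q = S q + a log q is monotone on (0, ∞)
  have hmono : MonotoneOn (fun q => S q + a * Real.log q) (Ioi 0) := by
    apply monotoneOn_of_deriv_nonneg (convex_Ioi 0)
    · exact hSreg.continuousOn.add
        ((Real.continuousOn_log.mono (fun x hx => ne_of_gt hx)).const_smul a)
    · rw [interior_Ioi]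
      intro x hx
      exact (((hdiff x hx).add
        ((Real.differentiableAt_log (ne_of_gt hx)).const_mul a))).differentiableWithinAt
    · rw [interior_Ioi]
      intro x hx
      have h1 : HasDerivAt (fun q => S q + a * Real.log q) (deriv S x + a * x⁻¹) x :=
        (hdiff x hx).hasDerivAt.add ((Real.hasDerivAt_log (ne_of_gt hx)).const_mul a)
      rw [h1.deriv]
      have h2 : -deriv S x ≤ 3 * c / (2 * x) := (hS' x hx).2
      have h3 : a * x⁻¹ = 3 * c / (2 * x) := by
        rw [ha]; field_simp
      linarith
  -- logarithmic upper bound for S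
  have hkey : ∀ q : ℝ, 0 < q → S q ≤ S 1 + a * max 0 (-Real.log q) := by
    intro q hq
    rcases le_or_gt 1 q with h1 | h1
    · have := hanti (mem_Ioi.mpr one_pos) (mem_Ioi.mpr hq) h1
      have hm : (0:ℝ) ≤ max 0 (-Real.log q) := le_max_left _ _
      nlinarith
    · have hg := hmono (mem_Ioi.mpr hq) (mem_Ioi.mpr one_pos) h1.le
      simp only [Real.log_one, mul_zero, add_zero] at hg
      have hlog : -Real.log q ≤ max 0 (-Real.log q) := le_max_right _ _
      nlinarith
  set S1 : ℝ := S 1 with hS1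
  set C : ℝ := 3 * S1 ^ 2 + 39 * a ^ 2 + 1 with hC
  have hCpos : 0 < C := by positivity
  refine ⟨C, hCpos, ?_⟩
  intro ρ ϑ hρ hϑ
  have hϑp : (0 : ℝ) < ϑ ^ ((3 : ℝ) / 2) := Real.rpow_pos_of_pos hϑ _
  set q : ℝ := ρ / ϑ ^ ((3 : ℝ) / 2) with hqdef
  have hq : 0 < q := div_pos hρ hϑp
  -- decompose -log q
  have hlogq : -Real.log q = (3 / 2) * Real.log ϑ - Real.log ρ := by
    rw [hqdef, Real.log_div (ne_of_gt hρ) (ne_of_gt hϑp), Real.log_rpow hϑ]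
    ring
  set L : ℝ := max 0 ((3 / 2) * Real.log ϑ) with hL
  set R : ℝ := max 0 (-Real.log ρ) with hR
  have hLnn : 0 ≤ L := le_max_left _ _
  have hRnn : 0 ≤ R := le_max_left _ _
  have hM : max 0 (-Real.log q) ≤ L + R := by
    apply max_le (by linarith)
    rw [hlogq]
    have h1 : (3 / 2) * Real.log ϑ ≤ L := le_max_right _ _
    have h2 : -Real.log ρ ≤ R := le_max_right _ _
    linarith
  -- bound on S q squared
  have hSq : S q ≤ S1 + a * (L + R) := by
    have h := hkey q hq
    have h2 : a * max 0 (-Real.log q) ≤ a * (L + R) :=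
      mul_le_mul_of_nonneg_left hM ha0.le
    linarith
  have hSq2 : S q ^ 2 ≤ (S1 + a * (L + R)) ^ 2 :=
    pow_le_pow_left₀ (hSnn q hq) hSq 2
  -- elementary bounds
  have hρ53 : ρ ≤ 1 + ρ ^ ((5 : ℝ) / 3) := by
    rcases le_or_gt ρ 1 with h | h
    · have : (0:ℝ) ≤ ρ ^ ((5 : ℝ) / 3) := Real.rpow_nonneg hρ.le _
      linarith
    · have h1 : ρ ^ (1 : ℝ) ≤ ρ ^ ((5 : ℝ) / 3) :=
        Real.rpow_le_rpow_of_exponent_le h.le (by norm_num)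
      rw [Real.rpow_one] at h1
      linarith
  have hLb : ρ * L ^ 2 ≤ 9 * (ρ * ϑ) := by
    rcases le_or_gt ϑ 1 with h | h
    · have hnp : (3 / 2) * Real.log ϑ ≤ 0 := by
        have := Real.log_nonpos hϑ.le h
        linarith
      have hL0 : L = 0 := max_eq_left hnp
      rw [hL0]
      have : (0:ℝ) ≤ ρ * ϑ := by positivity
      norm_num
      linarith
    · have hlog2 : (Real.log ϑ) ^ 2 ≤ 4 * ϑ := logsq_le_four_mul ϑ h.le
      have hlognn : 0 ≤ Real.log ϑ := Real.log_nonneg h.le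
      have hL1 : L = (3 / 2) * Real.log ϑ := max_eq_right (by linarith)
      rw [hL1]
      nlinarith
  have hRb : ρ * R ^ 2 ≤ 4 := by
    rcases le_or_gt 1 ρ with h | h
    · have hnp : -Real.log ρ ≤ 0 := by
        have := Real.log_nonneg h
        linarith
      have hR0 : R = 0 := max_eq_left hnp
      rw [hR0]
      norm_num
    · have hinv : 1 ≤ ρ⁻¹ := (one_le_inv₀ hρ).mpr h.le
      have hlog2 : (Real.log ρ⁻¹) ^ 2 ≤ 4 * ρ⁻¹ := logsq_le_four_mul _ hinv
      rw [Real.log_inv, neg_sq] at hlog2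
      have hln : 0 ≤ -Real.log ρ := by
        have := Real.log_nonpos hρ.le h.le
        linarith
      have hReq : R = -Real.log ρ := max_eq_right hln
      have h4 : ρ * (4 * ρ⁻¹) = 4 := by field_simp
      calc ρ * R ^ 2 = ρ * ((Real.log ρ) ^ 2) := by rw [hReq]; ring
        _ ≤ ρ * (4 * ρ⁻¹) := mul_le_mul_of_nonneg_left hlog2 hρ.le
        _ = 4 := h4
  -- put everything together
  have hmain : ρ * S q ^ 2 ≤
      3 * S1 ^ 2 * ρ + 3 * a ^ 2 * (ρ * L ^ 2) + 3 * a ^ 2 * (ρ * R ^ 2) := by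
    have h1 : ρ * S q ^ 2 ≤ ρ * (S1 + a * (L + R)) ^ 2 :=
      mul_le_mul_of_nonneg_left hSq2 hρ.le
    have h2 : (S1 + a * (L + R)) ^ 2 ≤ 3 * S1 ^ 2 + 3 * (a * L) ^ 2 + 3 * (a * R) ^ 2 := by
      calc (S1 + a * (L + R)) ^ 2 = (S1 + a * L + a * R) ^ 2 := by ring
        _ ≤ _ := sq_sum3_le S1 (a * L) (a * R)
    have h3 : ρ * (S1 + a * (L + R)) ^ 2 ≤
        ρ * (3 * S1 ^ 2 + 3 * (a * L) ^ 2 + 3 * (a * R) ^ 2) :=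
      mul_le_mul_of_nonneg_left h2 hρ.le
    calc ρ * S q ^ 2 ≤ ρ * (3 * S1 ^ 2 + 3 * (a * L) ^ 2 + 3 * (a * R) ^ 2) :=
          le_trans h1 h3
      _ = 3 * S1 ^ 2 * ρ + 3 * a ^ 2 * (ρ * L ^ 2) + 3 * a ^ 2 * (ρ * R ^ 2) := by ring
  have e1 : 3 * a ^ 2 * (ρ * L ^ 2) ≤ 3 * a ^ 2 * (9 * (ρ * ϑ)) :=
    mul_le_mul_of_nonneg_left hLb (by positivity)
  have e2 : 3 * a ^ 2 * (ρ * R ^ 2) ≤ 3 * a ^ 2 * 4 :=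
    mul_le_mul_of_nonneg_left hRb (by positivity)
  have e3 : 3 * S1 ^ 2 * ρ ≤ 3 * S1 ^ 2 * (1 + ρ ^ ((5 : ℝ) / 3)) :=
    mul_le_mul_of_nonneg_left hρ53 (by positivity)
  have h53nn : (0:ℝ) ≤ ρ ^ ((5 : ℝ) / 3) := Real.rpow_nonneg hρ.le _
  have e4 : 3 * S1 ^ 2 * ρ ^ ((5 : ℝ) / 3) ≤ C * ρ ^ ((5 : ℝ) / 3) :=
    mul_le_mul_of_nonneg_right (by nlinarith [sq_nonneg a]) h53nn
  have e5 : 27 * a ^ 2 * (ρ * ϑ) ≤ C * (ρ * ϑ) :=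
    mul_le_mul_of_nonneg_right (by nlinarith [sq_nonneg S1]) (by positivity)
  have e6 : (0:ℝ) ≤ C * ϑ ^ 2 := mul_nonneg hCpos.le (sq_nonneg _)
  have e0 : 3 * S1 ^ 2 + 12 * a ^ 2 ≤ C := by nlinarith [sq_nonneg a]
  have expand : C * (1 + ρ ^ ((5 : ℝ) / 3) + ρ * ϑ + ϑ ^ 2)
      = C + C * ρ ^ ((5 : ℝ) / 3) + C * (ρ * ϑ) + C * ϑ ^ 2 := by ring
  rw [expand]
  have t1 : ρ * S q ^ 2 ≤
      3 * S1 ^ 2 + 3 * S1 ^ 2 * ρ ^ ((5 : ℝ) / 3) + 27 * a ^ 2 * (ρ * ϑ) + 12 * a ^ 2 := by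
    linarith [hmain, e1, e2, e3]
  have t4 : 3 * S1 ^ 2 + 12 * a ^ 2 + 3 * S1 ^ 2 * ρ ^ ((5 : ℝ) / 3)
        + 27 * a ^ 2 * (ρ * ϑ) + 0
      ≤ C + C * ρ ^ ((5 : ℝ) / 3) + C * (ρ * ϑ) + C * ϑ ^ 2 :=
    add_le_add (add_le_add (add_le_add e0 e4) e5) e6
  calc ρ * S q ^ 2
      ≤ 3 * S1 ^ 2 + 3 * S1 ^ 2 * ρ ^ ((5 : ℝ) / 3) + 27 * a ^ 2 * (ρ * ϑ) + 12 * a ^ 2 := t1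
    _ = 3 * S1 ^ 2 + 12 * a ^ 2 + 3 * S1 ^ 2 * ρ ^ ((5 : ℝ) / 3) + 27 * a ^ 2 * (ρ * ϑ) + 0 := by
        ring
    _ ≤ C + C * ρ ^ ((5 : ℝ) / 3) + C * (ρ * ϑ) + C * ϑ ^ 2 := t4
end

section
/- Control of the squared molecular entropy by the molecular internal energy and radiation energy: Let c > 0, p̄ > 0 and let P ∈ C¹((0,∞)) and S ∈ C¹((0,∞)) satisfy: P′(q) > 0 and 0 < (5/3)P(q) − P′(q)q ≤ cq for all q > 0, lim_{q→∞} P(q)/q^{5/3} = p̄, S′(q) = −(3/2)((5/3)P(q) − P′(q)q)/q², and lim_{q→∞} S(q) = 0. Define, for ρ, ϑ > 0, s_M(ρ,ϑ) = S(ρ/ϑ^{3/2}) and ρ e_M(ρ,ϑ) = (3/2)ϑ^{5/2} P(ρ/ϑ^{3/2}). Then there exists a constant C > 0, depending only on c, p̄, P(1) and S(1), such that for all ρ, ϑ > 0: ρ s_M(ρ,ϑ)² ≤ C(1 + ρ + ρ e_M(ρ,ϑ) + ϑ²). -/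
open Real Set Filter

private lemma aux_qlog : ∀ q : ℝ, 0 < q → q ≤ 1 → q * (Real.log q) ^ 2 ≤ 4 := by
  intro q hq0 hq1
  set t : ℝ := -Real.log q with ht
  have ht0 : 0 ≤ t := by
    have := Real.log_nonpos hq0.le hq1
    simp [ht]; linarith
  have hqe : q = Real.exp (-t) := by
    rw [ht, neg_neg, Real.exp_log hq0]
  have he : t / 2 + 1 ≤ Real.exp (t / 2) := Real.add_one_le_exp _
  set E : ℝ := Real.exp (t / 2) with hE
  have hEpos : 0 < E := Real.exp_pos _
  have hEq : E ^ 2 * Real.exp (-t) = 1 := by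
    rw [hE, sq, ← Real.exp_add, ← Real.exp_add]; norm_num
  have ht2E : t ≤ 2 * E := by linarith
  have hlq : (Real.log q) ^ 2 = t ^ 2 := by rw [ht]; ring
  have h1 : 0 ≤ (4 * E ^ 2 - t ^ 2) * Real.exp (-t) :=
    mul_nonneg (by nlinarith) (Real.exp_pos _).le
  have key : Real.exp (-t) * t ^ 2 ≤ 4 := by nlinarith [hEq]
  rw [hlq, hqe]
  exact key

private lemma aux_pow32 : ∀ ϑ : ℝ, 0 < ϑ → ϑ ^ ((3:ℝ)/2) ≤ 1 + ϑ ^ 2 := by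
  intro ϑ hϑ
  rcases le_or_gt ϑ 1 with h | h
  · have := Real.rpow_le_one hϑ.le h (by norm_num : (0:ℝ) ≤ 3/2)
    nlinarith [sq_nonneg ϑ]
  · have h1 : ϑ ^ ((3:ℝ)/2) ≤ ϑ ^ (2:ℕ) := by
      rw [← Real.rpow_natCast ϑ 2]
      exact Real.rpow_le_rpow_of_exponent_le h.le (by norm_num)
    have h0 : 0 < ϑ ^ (2:ℕ) := pow_pos hϑ 2
    calc ϑ ^ ((3:ℝ)/2) ≤ ϑ ^ (2:ℕ) := h1
      _ ≤ 1 + ϑ ^ 2 := by norm_num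

set_option maxHeartbeats 1600000 in
/-- **Control of the squared molecular entropy by the molecular internal energy and
radiation energy.** Under the structural assumptions on the pressure profile `P` and
the entropy profile `S` (monotonicity, growth `P(q)/q^{5/3} → p̄`, the relation
`S′(q) = −(3/2)((5/3)P(q) − P′(q)q)/q²` and the third law `S(q) → 0`), there is
`C > 0`, depending only on `c`, `p̄`, `P(1)` and `S(1)`, such that for all
`ρ, ϑ > 0`, `ρ s_M(ρ,ϑ)² ≤ C(1 + ρ + ρ e_M(ρ,ϑ) + ϑ²)`, where
`s_M(ρ,ϑ) = S(ρ/ϑ^{3/2})` and `ρ e_M(ρ,ϑ) = (3/2)ϑ^{5/2}P(ρ/ϑ^{3/2})`. -/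
theorem molecular_entropy_controlled_by_energy
    (c pbar : ℝ) (hc : 0 < c) (hpbar : 0 < pbar) (P S : ℝ → ℝ)
    (hPreg : ContDiffOn ℝ 1 P (Ioi 0))
    (hP' : ∀ q : ℝ, 0 < q → 0 < deriv P q)
    (hPstr : ∀ q : ℝ, 0 < q →
      0 < (5 / 3) * P q - deriv P q * q ∧ (5 / 3) * P q - deriv P q * q ≤ c * q)
    (hPlim : Tendsto (fun q => P q / q ^ ((5 : ℝ) / 3)) atTop (nhds pbar))
    (hSreg : ContDiffOn ℝ 1 S (Ioi 0))
    (hS' : ∀ q : ℝ, 0 < q →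
      deriv S q = -(3 / 2) * ((5 / 3) * P q - deriv P q * q) / q ^ 2)
    (hS3rd : Tendsto S atTop (nhds 0)) :
    ∃ C : ℝ, 0 < C ∧ ∀ ρ ϑ : ℝ, 0 < ρ → 0 < ϑ →
      ρ * S (ρ / ϑ ^ ((3 : ℝ) / 2)) ^ 2
        ≤ C * (1 + ρ + (3 / 2) * ϑ ^ ((5 : ℝ) / 2) * P (ρ / ϑ ^ ((3 : ℝ) / 2)) + ϑ ^ 2) := by
  -- S is differentiable on (0,∞)
  have hSdiff : DifferentiableOn ℝ S (Ioi 0) := hSreg.differentiableOn one_ne_zero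
  have hSdiffAt : ∀ q : ℝ, 0 < q → DifferentiableAt ℝ S q := fun q hq =>
    (hSdiff q hq).differentiableAt (Ioi_mem_nhds hq)
  -- S is strictly decreasing on (0,∞)
  have hSanti : StrictAntiOn S (Ioi 0) := by
    apply strictAntiOn_of_deriv_neg (convex_Ioi 0) hSreg.continuousOn
    intro q hq
    rw [interior_Ioi] at hq
    rw [hS' q hq]
    have h1 := (hPstr q hq).1
    apply div_neg_of_neg_of_pos (by nlinarith) (pow_pos hq 2)
  -- S is nonnegative on (0,∞)
  have hS0 : ∀ q : ℝ, 0 < q → 0 ≤ S q := by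
    intro q hq
    apply le_of_tendsto hS3rd
    filter_upwards [eventually_ge_atTop (q + 1)] with r hr
    exact (hSanti hq (by simp only [mem_Ioi]; linarith) (by linarith)).le
  -- S q ≤ S 1 for q ≥ 1
  have hSle1 : ∀ q : ℝ, 1 ≤ q → S q ≤ S 1 := by
    intro q hq
    exact hSanti.antitoneOn (by norm_num) (by simp only [mem_Ioi]; linarith) hq
  -- monotonicity of g q = S q + (3c/2) log q on (0,∞)
  have hgmono : MonotoneOn (fun x => S x + 3 * c / 2 * Real.log x) (Ioi 0) := by
    apply monotoneOn_of_deriv_nonneg (convex_Ioi 0)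
    · exact hSreg.continuousOn.add (continuousOn_const.mul
        (Real.continuousOn_log.mono (fun x hx => ne_of_gt hx)))
    · intro q hq
      rw [interior_Ioi] at hq
      exact ((hSdiffAt q hq).add
        ((Real.differentiableAt_log hq.ne').const_mul _)).differentiableWithinAt
    · intro q hq
      rw [interior_Ioi] at hq
      have hd : HasDerivAt (fun x => S x + 3 * c / 2 * Real.log x)
          (deriv S q + 3 * c / 2 * q⁻¹) q :=
        (hSdiffAt q hq).hasDerivAt.add ((Real.hasDerivAt_log hq.ne').const_mul _)
      rw [hd.deriv, hS' q hq]
      have hX := (hPstr q hq).2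
      have hqne : q ≠ 0 := hq.ne'
      have e : -(3/2) * ((5/3) * P q - deriv P q * q) / q ^ 2 + 3 * c / 2 * q⁻¹
          = (3/2) * (c * q - ((5/3) * P q - deriv P q * q)) / q ^ 2 := by
        field_simp
        ring
      rw [e]
      apply div_nonneg (by nlinarith) (by positivity)
  -- bound for q ≤ 1
  have hSsmall : ∀ q : ℝ, 0 < q → q ≤ 1 → S q ≤ S 1 + 3 * c / 2 * (-Real.log q) := by
    intro q hq0 hq1
    have := hgmono (by exact hq0) (by norm_num : (1:ℝ) ∈ Ioi 0) hq1
    simp only [Real.log_one, mul_zero, add_zero] at this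
    linarith
  -- P is positive on (0,∞)
  have hP0 : ∀ q : ℝ, 0 < q → 0 ≤ P q := by
    intro q hq
    nlinarith [hP' q hq, (hPstr q hq).1]
  have hS1 : 0 ≤ S 1 := hS0 1 one_pos
  refine ⟨2 * (S 1) ^ 2 + 18 * c ^ 2 + 1, by positivity, ?_⟩
  intro ρ ϑ hρ hϑ
  set T : ℝ := ϑ ^ ((3:ℝ)/2) with hT
  have hT0 : 0 < T := Real.rpow_pos_of_pos hϑ _
  set q : ℝ := ρ / T with hq
  have hq0 : 0 < q := div_pos hρ hT0
  have hρeq : q * T = ρ := div_mul_cancel₀ ρ hT0.ne'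
  have hE : 0 ≤ 3 / 2 * ϑ ^ ((5:ℝ)/2) * P q :=
    mul_nonneg (mul_nonneg (by norm_num) (Real.rpow_nonneg hϑ.le _)) (hP0 q hq0)
  have hTb : T ≤ 1 + ϑ ^ 2 := aux_pow32 ϑ hϑ
  have hSq0 : 0 ≤ S q := hS0 q hq0
  set Er : ℝ := 3 / 2 * ϑ ^ ((5:ℝ)/2) * P q with hEr
  set C : ℝ := 2 * (S 1) ^ 2 + 18 * c ^ 2 + 1 with hC
  have hCnn : (0:ℝ) ≤ C := by positivity
  have t3 : 0 ≤ C * Er := mul_nonneg hCnn hE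
  have expand : C * (1 + ρ + Er + ϑ ^ 2) = C * ρ + C * (1 + ϑ ^ 2) + C * Er := by ring
  rcases le_or_gt q 1 with h1 | h1
  · -- q ≤ 1
    have hSb := hSsmall q hq0 h1
    have hlog := aux_qlog q hq0 h1
    have h2 : S q ^ 2 ≤ 2 * (S 1) ^ 2 + 9 * c ^ 2 / 2 * (Real.log q) ^ 2 := by
      nlinarith [sq_nonneg (S 1 - 3 * c / 2 * (-Real.log q)), hSb, hSq0]
    have step1 : ρ * S q ^ 2 ≤ q * T * (2 * (S 1) ^ 2 + 9 * c ^ 2 / 2 * (Real.log q) ^ 2) := by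
      rw [hρeq]
      exact mul_le_mul_of_nonneg_left h2 hρ.le
    have step2 : q * T * (2 * (S 1) ^ 2 + 9 * c ^ 2 / 2 * (Real.log q) ^ 2)
        = 2 * (S 1) ^ 2 * (q * T) + 9 * c ^ 2 / 2 * T * (q * (Real.log q) ^ 2) := by ring
    have step3 : 9 * c ^ 2 / 2 * T * (q * (Real.log q) ^ 2) ≤ 9 * c ^ 2 / 2 * T * 4 :=
      mul_le_mul_of_nonneg_left hlog (by positivity)
    have step5 : 18 * c ^ 2 * T ≤ 18 * c ^ 2 * (1 + ϑ ^ 2) :=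
      mul_le_mul_of_nonneg_left hTb (by positivity)
    have hchain : ρ * S q ^ 2 ≤ 2 * (S 1) ^ 2 * ρ + 18 * c ^ 2 * (1 + ϑ ^ 2) := by
      have hρq : 2 * (S 1) ^ 2 * (q * T) = 2 * (S 1) ^ 2 * ρ := by rw [hρeq]
      linarith [step1, step2.le, step3, step5, hρq.le]
    have t1 : 2 * (S 1) ^ 2 * ρ ≤ C * ρ :=
      mul_le_mul_of_nonneg_right (by nlinarith [sq_nonneg c]) hρ.le
    have t2 : 18 * c ^ 2 * (1 + ϑ ^ 2) ≤ C * (1 + ϑ ^ 2) :=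
      mul_le_mul_of_nonneg_right (by nlinarith [sq_nonneg (S 1)]) (by positivity)
    linarith [hchain, t1, t2, t3, expand.le]
  · -- q > 1
    have hSb : S q ≤ S 1 := hSle1 q h1.le
    have h2 : S q ^ 2 ≤ (S 1) ^ 2 := by nlinarith
    have step1 : ρ * S q ^ 2 ≤ (S 1) ^ 2 * ρ := by
      have := mul_le_mul_of_nonneg_left h2 hρ.le
      linarith [this]
    have t1 : (S 1) ^ 2 * ρ ≤ C * ρ :=
      mul_le_mul_of_nonneg_right (by nlinarith [sq_nonneg c, sq_nonneg (S 1)]) hρ.le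
    have t2 : 0 ≤ C * (1 + ϑ ^ 2) := mul_nonneg hCnn (by positivity)
    linarith [step1, t1, t2, t3, expand.le]
end

section
/- Pointwise coercivity inequality for temperature-dependent viscosity: Let E be a real inner product space. For every ε ∈ (0,1), for all a, b ∈ E and all ϑ > 0, θ̃ > 0: (1 + ϑ)(θ̃/ϑ)‖a − (ϑ/θ̃)b‖² ≥ (1 − ε)θ̃‖a − b‖² − ((1 − ε)/ε)(1/θ̃)(ϑ − θ̃)²‖b‖². -/
open Real

/-- **Pointwise coercivity inequality for temperature-dependent viscosity.** In any
real inner product space, for every `ε ∈ (0,1)`, all vectors `a, b` and all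
temperatures `ϑ, θ̃ > 0`,
`(1+ϑ)(θ̃/ϑ)‖a − (ϑ/θ̃)b‖² ≥ (1−ε)θ̃‖a−b‖² − ((1−ε)/ε)(1/θ̃)(ϑ−θ̃)²‖b‖²`. -/
theorem viscosity_coercivity_pointwise
    {E : Type*} [NormedAddCommGroup E] [InnerProductSpace ℝ E]
    (ε : ℝ) (hε0 : 0 < ε) (hε1 : ε < 1) (a b : E) (ϑ θt : ℝ)
    (hϑ : 0 < ϑ) (hθt : 0 < θt) :
    (1 - ε) * θt * ‖a - b‖ ^ 2 - (1 - ε) / ε * (1 / θt) * (ϑ - θt) ^ 2 * ‖b‖ ^ 2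
      ≤ (1 + ϑ) * (θt / ϑ) * ‖a - (ϑ / θt) • b‖ ^ 2 := by
  have hab : a - b = (a - (ϑ / θt) • b) + ((ϑ - θt) / θt) • b := by
    have : (ϑ - θt) / θt = ϑ / θt - 1 := by field_simp
    rw [this, sub_smul, one_smul]
    abel
  have h1 : ‖a - b‖ ≤ ‖a - (ϑ / θt) • b‖ + |(ϑ - θt) / θt| * ‖b‖ := by
    calc ‖a - b‖ = ‖(a - (ϑ / θt) • b) + ((ϑ - θt) / θt) • b‖ := by rw [← hab]
    _ ≤ ‖a - (ϑ / θt) • b‖ + ‖((ϑ - θt) / θt) • b‖ := norm_add_le _ _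
    _ = ‖a - (ϑ / θt) • b‖ + |(ϑ - θt) / θt| * ‖b‖ := by rw [norm_smul, Real.norm_eq_abs]
  set u := ‖a - (ϑ / θt) • b‖ with hu
  set v := |(ϑ - θt) / θt| * ‖b‖ with hv
  have hu0 : 0 ≤ u := norm_nonneg _
  have hv0 : 0 ≤ v := by positivity
  have hab0 : 0 ≤ ‖a - b‖ := norm_nonneg _
  have hv2 : v ^ 2 = (ϑ - θt) ^ 2 / θt ^ 2 * ‖b‖ ^ 2 := by
    rw [hv, mul_pow, sq_abs, div_pow]
  -- Young's inequality step
  have hyoung : (1 - ε) * ‖a - b‖ ^ 2 ≤ u ^ 2 + (1 - ε) / ε * v ^ 2 := by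
    have h2 : ‖a - b‖ ^ 2 ≤ (u + v) ^ 2 := by nlinarith
    have h3 : (1 - ε) * (u + v) ^ 2 ≤ u ^ 2 + (1 - ε) / ε * v ^ 2 := by
      rw [← sub_nonneg]
      have hkey : (u ^ 2 + (1 - ε) / ε * v ^ 2 - (1 - ε) * (u + v) ^ 2) * ε
          = (ε * u - (1 - ε) * v) ^ 2 := by
        field_simp
        ring
      nlinarith [sq_nonneg (ε * u - (1 - ε) * v)]
    nlinarith
  have hθϑ : θt ≤ (1 + ϑ) * (θt / ϑ) := by
    rw [add_mul, one_mul, mul_div_cancel₀ _ hϑ.ne']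
    have : 0 < θt / ϑ := div_pos hθt hϑ
    linarith
  have hmain : (1 - ε) * θt * ‖a - b‖ ^ 2
      ≤ θt * u ^ 2 + (1 - ε) / ε * (1 / θt) * (ϑ - θt) ^ 2 * ‖b‖ ^ 2 := by
    have := mul_le_mul_of_nonneg_left hyoung hθt.le
    have heq : θt * ((1 - ε) / ε * v ^ 2)
        = (1 - ε) / ε * (1 / θt) * (ϑ - θt) ^ 2 * ‖b‖ ^ 2 := by
      rw [hv2]; field_simp
    nlinarith
  have hfin : θt * u ^ 2 ≤ (1 + ϑ) * (θt / ϑ) * u ^ 2 :=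
    mul_le_mul_of_nonneg_right hθϑ (sq_nonneg u)
  linarith
end
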